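/- Let K be a convex body in ℝ^n, let Λ be a full-rank lattice in ℝ^n with K + Λ = ℝ^n, and let u ∈ Λ \ {0}. Then det(Λ) ≤ vol(K) − (1/2)·vol(K ∩ (K + u)); equivalently, the covering density satisfies vol(K)/det(Λ) ≥ vol(K)/(vol(K) − (1/2)·vol(K ∩ (K+u))). -/

import Mathlib

open Pointwise MeasureTheory ENNReal

lemma two_add_encard_le' {β : Type*} {S T : Set β} (hST : S ⊆ T) (hTne : T.Nonempty)
    (hex : S.Finite → S.Nonempty → ∃ w ∈ T, w ∉ S) :
    2 + (S.encard : ℝ≥0∞) ≤ 2 * (T.encard : ℝ≥0∞) := by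
  rcases S.eq_empty_or_nonempty with rfl | hSne
  · have h1 : (1:ℕ∞) ≤ T.encard := Set.one_le_encard_iff_nonempty.2 hTne
    have h1' : (1:ℝ≥0∞) ≤ (T.encard : ℝ≥0∞) := by exact_mod_cast h1
    simpa using (mul_le_mul_right h1' 2)
  by_cases hfin : S.Finite
  · obtain ⟨w, hwT, hwS⟩ := hex hfin hSne
    have h1 : S.encard + 1 ≤ T.encard := by
      rw [← Set.encard_insert_of_notMem hwS]
      exact Set.encard_mono (Set.insert_subset hwT hST)
    have h1' : (S.encard : ℝ≥0∞) + 1 ≤ (T.encard : ℝ≥0∞) := by exact_mod_cast h1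
    calc (2:ℝ≥0∞) + S.encard ≤ 2 + ((S.encard : ℝ≥0∞) + S.encard) :=
          add_le_add_right le_self_add _
      _ = 2 * ((S.encard:ℝ≥0∞) + 1) := by ring
      _ ≤ 2 * T.encard := mul_le_mul_right h1' 2
  · have hT : T.encard = ⊤ := Set.encard_eq_top (fun h => hfin (h.subset hST))
    rw [hT]
    exact le_of_le_of_eq le_top (by simp)

theorem det_le_vol_sub_half_inter (n : ℕ)
    (K : Set (EuclideanSpace ℝ (Fin n)))
    (hKcpt : IsCompact K) (hKconv : Convex ℝ K) (hKint : (interior K).Nonempty)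
    (b : Module.Basis (Fin n) ℝ (EuclideanSpace ℝ (Fin n)))
    (hcov : K + (↑(Submodule.span ℤ (Set.range b)) : Set (EuclideanSpace ℝ (Fin n)))
      = Set.univ)
    (u : EuclideanSpace ℝ (Fin n)) (hu : u ∈ Submodule.span ℤ (Set.range b))
    (hu0 : u ≠ 0) :
    ENNReal.ofReal |(Matrix.of fun i j => b i j).det| + volume (K ∩ (K + {u})) / 2
      ≤ volume K := by
  classical
  set Λ : Submodule ℤ (EuclideanSpace ℝ (Fin n)) := Submodule.span ℤ (Set.range b) with hΛdef
  set A : Set (EuclideanSpace ℝ (Fin n)) := K ∩ (K + {u}) with hAdef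
  set D : Set (EuclideanSpace ℝ (Fin n)) := ZSpan.fundamentalDomain b with hDdef
  -- volume of the fundamental domain
  have hvolD : volume D = ENNReal.ofReal |(Matrix.of fun i j => b i j).det| := by
    let f := (EuclideanSpace.equiv (Fin n) ℝ).toLinearEquiv
    let b' := b.map f
    have h1 : D = (MeasurableEquiv.toLp 2 (Fin n → ℝ)).symm ⁻¹' (ZSpan.fundamentalDomain b') := by
      ext x
      simp [hDdef, ZSpan.fundamentalDomain, b', Module.Basis.map_repr]
      rfl
    rw [h1, (EuclideanSpace.volume_preserving_symm_measurableEquiv_toLp (Fin n)).measure_preimage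
      (ZSpan.fundamentalDomain_measurableSet b').nullMeasurableSet,
      ZSpan.volume_fundamentalDomain]
    rfl
  -- measurability
  have hKm : MeasurableSet K := hKcpt.isClosed.measurableSet
  have hKum : MeasurableSet (K + ({u} : Set (EuclideanSpace ℝ (Fin n)))) :=
    (hKcpt.add isCompact_singleton).isClosed.measurableSet
  have hAm : MeasurableSet A := hKm.inter hKum
  have hDm : MeasurableSet D := ZSpan.fundamentalDomain_measurableSet b
  have hfund : IsAddFundamentalDomain Λ D volume := ZSpan.isAddFundamentalDomain b volume
  -- membership characterizations
  have hKu : ∀ y : (EuclideanSpace ℝ (Fin n)), y ∈ K + ({u} : Set (EuclideanSpace ℝ (Fin n))) ↔ y - u ∈ K := by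
    intro y
    constructor
    · rintro ⟨k, hk, w, hw, rfl⟩
      simp only [Set.mem_singleton_iff] at hw; subst hw; simpa using hk
    · intro h; exact ⟨y - u, h, u, rfl, sub_add_cancel y u⟩
  have hmemK : ∀ (v x : (EuclideanSpace ℝ (Fin n))), x ∈ v +ᵥ K ↔ -v + x ∈ K := fun v x =>
    Set.mem_vadd_set_iff_neg_vadd_mem
  have hmemA : ∀ (v x : (EuclideanSpace ℝ (Fin n))), x ∈ v +ᵥ A ↔ (-v + x ∈ K ∧ -v + x - u ∈ K) := by
    intro v x
    rw [show (x ∈ v +ᵥ A) ↔ -v + x ∈ A from Set.mem_vadd_set_iff_neg_vadd_mem, hAdef,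
      Set.mem_inter_iff, hKu]
  -- tsum of indicators = encard
  have htsum : ∀ (s : Set (EuclideanSpace ℝ (Fin n))) (x : (EuclideanSpace ℝ (Fin n))),
      ∑' v : Λ, ((v:(EuclideanSpace ℝ (Fin n))) +ᵥ s).indicator (1 : (EuclideanSpace ℝ (Fin n)) → ℝ≥0∞) x
        = ({w : Λ | x ∈ (w:(EuclideanSpace ℝ (Fin n))) +ᵥ s}).encard := by
    intro s x
    calc ∑' v : Λ, ((v:(EuclideanSpace ℝ (Fin n))) +ᵥ s).indicator (1 : (EuclideanSpace ℝ (Fin n)) → ℝ≥0∞) x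
        = ∑' v : Λ, Set.indicator {w : Λ | x ∈ (w:(EuclideanSpace ℝ (Fin n))) +ᵥ s} (fun _ => (1:ℝ≥0∞)) v :=
          tsum_congr fun v => by by_cases h : x ∈ (v:(EuclideanSpace ℝ (Fin n))) +ᵥ s <;> simp [h]
      _ = ∑' (_ : {w : Λ | x ∈ (w:(EuclideanSpace ℝ (Fin n))) +ᵥ s}), (1:ℝ≥0∞) := (tsum_subtype _ _).symm
      _ = _ := ENNReal.tsum_set_one _
  -- pointwise inequality
  have key : ∀ x : (EuclideanSpace ℝ (Fin n)),
      (2:ℝ≥0∞) + ∑' v : Λ, ((v:(EuclideanSpace ℝ (Fin n))) +ᵥ A).indicator 1 x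
        ≤ 2 * ∑' v : Λ, ((v:(EuclideanSpace ℝ (Fin n))) +ᵥ K).indicator 1 x := by
    intro x
    rw [htsum A x, htsum K x]
    apply two_add_encard_le'
    · intro v hv
      rw [Set.mem_setOf_eq, hmemA] at hv
      rw [Set.mem_setOf_eq, hmemK]
      exact hv.1
    · -- T nonempty from covering
      have hx : x ∈ K + (Λ : Set (EuclideanSpace ℝ (Fin n))) := by rw [hΛdef, hcov]; trivial
      obtain ⟨k, hk, l, hl, hkl⟩ := hx
      refine ⟨⟨l, hl⟩, ?_⟩
      rw [Set.mem_setOf_eq, hmemK]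
      have : -l + x = k := by
        rw [← hkl]; show -l + (k + l) = k; rw [add_comm k l, neg_add_cancel_left]
      rw [this]; exact hk
    · -- existence of extra element
      intro hfin hne
      set φ : Λ → ℝ := fun v => (inner ℝ u (v:(EuclideanSpace ℝ (Fin n))) : ℝ) with hφ
      obtain ⟨v₀, hv₀S, hmax⟩ := Set.exists_max_image _ φ hfin hne
      have hv₀ := hv₀S
      rw [Set.mem_setOf_eq, hmemA] at hv₀
      refine ⟨v₀ + ⟨u, hu⟩, ?_, ?_⟩
      · rw [Set.mem_setOf_eq, hmemK]
        have hcoe : ((v₀ + ⟨u, hu⟩ : Λ) : (EuclideanSpace ℝ (Fin n))) = (v₀:(EuclideanSpace ℝ (Fin n))) + u := rfl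
        rw [hcoe, show -((v₀:(EuclideanSpace ℝ (Fin n))) + u) + x = (-(v₀:(EuclideanSpace ℝ (Fin n))) + x) - u by
          rw [neg_add, add_right_comm, ← sub_eq_add_neg]]
        exact hv₀.2
      · intro hw
        have h1 := hmax _ hw
        have h2 : φ (v₀ + ⟨u, hu⟩) = φ v₀ + (inner ℝ u u : ℝ) := by
          simp only [hφ, Submodule.coe_add]
          rw [inner_add_right]
        have h3 : 0 < (inner ℝ u u : ℝ) := by
          rw [real_inner_self_eq_norm_sq]
          have := norm_pos_iff.2 hu0
          positivity
        rw [h2] at h1; linarith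
  haveI : MeasurableVAdd (↥Λ) (EuclideanSpace ℝ (Fin n)) :=
    { measurable_const_vadd := fun c =>
        measurable_const_vadd (c : EuclideanSpace ℝ (Fin n))
      measurable_vadd_const := fun x => measurable_subtype_coe.add_const x }
  haveI : VAddInvariantMeasure (↥Λ) (EuclideanSpace ℝ (Fin n)) volume :=
    ⟨fun c s _ => measure_preimage_add volume (c : EuclideanSpace ℝ (Fin n)) s⟩
  haveI : Countable (↥Λ) := by rw [hΛdef]; infer_instance
  -- decomposition over the fundamental domain
  have hdecomp : ∀ s : Set (EuclideanSpace ℝ (Fin n)), MeasurableSet s →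
      volume s = ∫⁻ x in D, ∑' v : Λ, ((v:(EuclideanSpace ℝ (Fin n))) +ᵥ s).indicator 1 x := by
    intro s hs
    rw [hfund.measure_eq_tsum s]
    refine (tsum_congr fun v => ?_).trans
      (lintegral_tsum fun v : ↥Λ =>
        (measurable_one.indicator
          (hs.const_vadd ((v : EuclideanSpace ℝ (Fin n))))).aemeasurable).symm
    rw [lintegral_indicator_one (hs.const_vadd _), Measure.restrict_apply (hs.const_vadd _)]
    rfl
  have hmain : 2 * volume D + volume A ≤ 2 * volume K := by
    have hmono : (∫⁻ x in D, ((2:ℝ≥0∞) + ∑' v : Λ, ((v:(EuclideanSpace ℝ (Fin n))) +ᵥ A).indicator 1 x))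
        ≤ ∫⁻ x in D, (2 * ∑' v : Λ, ((v:(EuclideanSpace ℝ (Fin n))) +ᵥ K).indicator 1 x) :=
      lintegral_mono fun x => key x
    rw [lintegral_add_left measurable_const, setLIntegral_const,
      lintegral_const_mul' _ _ ENNReal.ofNat_ne_top] at hmono
    rw [hdecomp A hAm, hdecomp K hKm]
    calc 2 * volume D + (∫⁻ x in D, ∑' v : Λ, ((v:(EuclideanSpace ℝ (Fin n))) +ᵥ A).indicator 1 x)
        = 2 * volume D + (∫⁻ x in D, ∑' v : Λ, ((v:(EuclideanSpace ℝ (Fin n))) +ᵥ A).indicator 1 x) := rfl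
      _ ≤ 2 * ∫⁻ x in D, ∑' v : Λ, ((v:(EuclideanSpace ℝ (Fin n))) +ᵥ K).indicator 1 x := by
          rw [mul_comm (2:ℝ≥0∞) (volume D)] at hmono ⊢
          exact hmono
  have h2 : ∀ x : ℝ≥0∞, 2 * x / 2 = x := fun x => by
    rw [mul_comm, mul_div_assoc, ENNReal.div_self two_ne_zero ENNReal.ofNat_ne_top, mul_one]
  rw [← hvolD]
  calc volume D + volume A / 2 = (2 * volume D + volume A) / 2 := by
        rw [ENNReal.add_div, h2]
    _ ≤ 2 * volume K / 2 := ENNReal.div_le_div_right hmain 2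
    _ = volume K := h2 _
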